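/- Let $G_n$ be the $n \times n$ matrix with $0$ on the diagonal, $1$ above the diagonal, $-1$ on the subdiagonal, and $0$ below. For $0 \le k \le n$, the sum $S_{n-k}$ of all principal minors of order $n-k$ of $G_n$ equals $\sum_{j_1 + j_2 + \cdots + j_{k+1} = n-2k-1} f_{j_1} f_{j_2} \cdots f_{j_{k+1}}$, where each $j_t \ge -1$. -/

import Mathlib

open Finset

def matOf (r : ℕ) (e : Fin r → ℕ) : Matrix (Fin r) (Fin r) ℤ :=
  fun i j => if e i = e j + 1 then -1 else if e i < e j then 1 else 0

def runMat (r : ℕ) : Matrix (Fin r) (Fin r) ℤ := matOf r (fun i => (i : ℕ))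

def auxMat (r : ℕ) : Matrix (Fin r) (Fin r) ℤ :=
  fun i j => if (j : ℕ) = r - 1 then 1 else
    if (i : ℕ) = (j : ℕ) + 1 then -1 else if (i : ℕ) < (j : ℕ) then 1 else 0

lemma succAbove_val {m : ℕ} (j : Fin (m+1)) (i : Fin m) :
    ((j.succAbove i : Fin (m+1)) : ℕ) = if (i : ℕ) < (j : ℕ) then (i : ℕ) else (i : ℕ) + 1 := by
  rw [Fin.succAbove]
  split_ifs with h1 h2 h2
  · rfl
  · exact absurd (by simpa [Fin.lt_def] using h1) h2
  · exact absurd (by simpa [Fin.lt_def] using h2) h1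
  · rfl

lemma stepRun (s : ℕ) : (runMat (s+2)).det = (auxMat (s+1)).det := by
  rw [show s + 2 = (s+1).succ from rfl, Matrix.det_succ_row _ (Fin.last (s+1))]
  rw [Finset.sum_eq_single_of_mem (⟨s, by omega⟩ : Fin (s+2))]
  · have hm : (runMat (s+2)).submatrix (Fin.last (s+1)).succAbove
        (⟨s, by omega⟩ : Fin (s+2)).succAbove = auxMat (s+1) := by
      ext i j
      have hi : ((Fin.castSucc i : Fin (s+2)) : ℕ) = (i : ℕ) := rfl
      have hj := succAbove_val (⟨s, by omega⟩ : Fin (s+2)) j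
      have hi2 : (i:ℕ) < s + 1 := i.isLt
      have hj2 : (j:ℕ) < s + 1 := j.isLt
      simp only [Matrix.submatrix_apply, runMat, matOf, auxMat, Fin.succAbove_last, hi, hj]
      split_ifs <;> omega
    rw [hm]
    have hentry : runMat (s+2) (Fin.last (s+1)) ⟨s, by omega⟩ = -1 := by
      simp [runMat, matOf]
    rw [hentry]
    have hlast : ((Fin.last (s+1) : Fin (s+2)) : ℕ) = s + 1 := rfl
    have hv : ((⟨s, by omega⟩ : Fin (s+2)) : ℕ) = s := rfl
    rw [hlast, hv]
    have hodd : Odd (s + 1 + s) := ⟨s, by ring⟩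
    rw [hodd.neg_one_pow]
    ring
  · exact Finset.mem_univ _
  · intro j _ hj
    have h2 : (j : ℕ) ≠ s := fun h => hj (Fin.ext (by simpa using h))
    have : runMat (s+2) (Fin.last (s+1)) j = 0 := by
      simp only [runMat, matOf]
      have h1 : ((Fin.last (s+1) : Fin (s+2)) : ℕ) = s + 1 := rfl
      have h3 : (j : ℕ) < s + 2 := j.isLt
      simp only [h1]
      split_ifs <;> omega
    rw [this]; ring

lemma stepAux (s : ℕ) : (auxMat (s+2)).det = (runMat (s+1)).det + (auxMat (s+1)).det := by
  rw [show s + 2 = (s+1).succ from rfl, Matrix.det_succ_row _ (Fin.last (s+1))]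
  have c1 : Fin (s+2) := ⟨s, by omega⟩
  set F : Fin (s+2) → ℤ := fun j => (-1) ^ (((Fin.last (s+1) : Fin (s+2)) : ℕ) + (j:ℕ)) *
      auxMat (s+2) (Fin.last (s+1)) j *
      ((auxMat (s+2)).submatrix (Fin.last (s+1)).succAbove j.succAbove).det with hF
  have hne : (⟨s, by omega⟩ : Fin (s+2)) ≠ (⟨s+1, by omega⟩ : Fin (s+2)) := by
    intro h; exact absurd (congrArg Fin.val h) (by simp)
  have hsub : ({⟨s, by omega⟩, ⟨s+1, by omega⟩} : Finset (Fin (s+2))) ⊆ univ := subset_univ _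
  rw [← Finset.sum_subset hsub]
  · rw [Finset.sum_pair hne]
    have hlast : ((Fin.last (s+1) : Fin (s+2)) : ℕ) = s + 1 := rfl
    -- term at col s : contributes (auxMat (s+1)).det
    have hm1 : (auxMat (s+2)).submatrix (Fin.last (s+1)).succAbove
        (⟨s, by omega⟩ : Fin (s+2)).succAbove = auxMat (s+1) := by
      ext i j
      have hi : ((Fin.castSucc i : Fin (s+2)) : ℕ) = (i : ℕ) := rfl
      have hj := succAbove_val (⟨s, by omega⟩ : Fin (s+2)) j
      have hi2 : (i:ℕ) < s + 1 := i.isLt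
      have hj2 : (j:ℕ) < s + 1 := j.isLt
      simp only [Matrix.submatrix_apply, auxMat, Fin.succAbove_last, hi, hj]
      split_ifs <;> omega
    have hm2 : (auxMat (s+2)).submatrix (Fin.last (s+1)).succAbove
        (⟨s+1, by omega⟩ : Fin (s+2)).succAbove = runMat (s+1) := by
      ext i j
      have hi : ((Fin.castSucc i : Fin (s+2)) : ℕ) = (i : ℕ) := rfl
      have hj := succAbove_val (⟨s+1, by omega⟩ : Fin (s+2)) j
      have hi2 : (i:ℕ) < s + 1 := i.isLt
      have hj2 : (j:ℕ) < s + 1 := j.isLt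
      simp only [Matrix.submatrix_apply, auxMat, runMat, matOf, Fin.succAbove_last, hi, hj]
      split_ifs <;> omega
    have he1 : auxMat (s+2) (Fin.last (s+1)) ⟨s, by omega⟩ = -1 := by
      simp only [auxMat, hlast]
      norm_num
    have he2 : auxMat (s+2) (Fin.last (s+1)) ⟨s+1, by omega⟩ = 1 := by
      simp only [auxMat, hlast]
      norm_num
    skip
    simp only [hm1, hm2, he1, he2, hlast]
    have hodd : Odd (s + 1 + s) := ⟨s, by ring⟩
    have heven : Even (s + 1 + (s + 1)) := ⟨s+1, by ring⟩
    rw [hodd.neg_one_pow, heven.neg_one_pow]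
    ring
  · intro j _ hj
    have h2 : (j : ℕ) ≠ s ∧ (j : ℕ) ≠ s + 1 := by
      constructor <;> intro h <;> apply hj <;> simp [Finset.mem_insert, Finset.mem_singleton]
      · left; exact Fin.ext (by simpa using h)
      · right; exact Fin.ext (by simpa using h)
    have : auxMat (s+2) (Fin.last (s+1)) j = 0 := by
      simp only [auxMat]
      have h1 : ((Fin.last (s+1) : Fin (s+2)) : ℕ) = s + 1 := rfl
      have h3 : (j : ℕ) < s + 2 := j.isLt
      simp only [h1]
      split_ifs <;> omega
    rw [this]; ring

lemma detRunAux (f : ℤ → ℤ) (hf1 : f (-1) = 1) (hf0 : f 0 = 0)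
    (hf : ∀ m : ℤ, f (m + 1) = f m + f (m - 1)) :
    ∀ r : ℕ, (runMat r).det = f ((r : ℤ) - 1) ∧
      (auxMat r).det = (if r = 0 then 1 else f r) := by
  have key : ∀ r : ℕ, ((runMat r).det = f ((r : ℤ) - 1) ∧
      (auxMat r).det = (if r = 0 then 1 else f r)) ∧
      ((runMat (r+1)).det = f (((r:ℤ)+1) - 1) ∧
      (auxMat (r+1)).det = f (r+1)) := by
    intro r
    induction r with
    | zero =>
      refine ⟨⟨?_, ?_⟩, ?_, ?_⟩
      · rw [Matrix.det_fin_zero, show ((0:ℕ):ℤ) - 1 = -1 by norm_num, hf1]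
      · rw [Matrix.det_fin_zero]; simp
      · rw [Matrix.det_fin_one]; simpa [runMat, matOf] using hf0.symm
      · rw [Matrix.det_fin_one]
        have h0 : auxMat 1 0 0 = 1 := by simp [auxMat]
        have h1 : f 1 = 1 := by
          rw [show (1:ℤ) = 0 + 1 by ring, hf 0, hf0, show (0:ℤ) - 1 = -1 by ring, hf1]
        rw [h0]
        push_cast
        rw [h1]
    | succ s ih =>
      obtain ⟨_, hA, hB⟩ := ih
      refine ⟨⟨hA, by simpa using hB⟩, ?_, ?_⟩
      · rw [stepRun s, hB]
        push_cast
        ring_nf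
      · rw [stepAux s, hA, hB]
        push_cast
        rw [hf ((s:ℤ)+1)]
        ring_nf
  intro r
  exact (key r).1

lemma matOf_shift (r c : ℕ) (e : Fin r → ℕ) :
    matOf r (fun i => c + e i) = matOf r e := by
  ext i j
  simp only [matOf]
  split_ifs <;> omega

lemma det_matOf_cast {r r' : ℕ} (h : r' = r) (e : Fin r → ℕ) :
    (matOf r' (fun i => e (Fin.cast h i))).det = (matOf r e).det := by
  rw [← Matrix.det_submatrix_equiv_self (finCongr h) (matOf r e)]
  congr 1

lemma det_matOf_split (p q : ℕ) (e : Fin (p+q) → ℕ)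
    (h : ∀ (i : Fin p) (j : Fin q), e (Fin.castAdd q i) + 1 < e (Fin.natAdd p j)) :
    (matOf (p+q) e).det =
      (matOf p (fun i => e (Fin.castAdd q i))).det *
      (matOf q (fun j => e (Fin.natAdd p j))).det := by
  rw [← Matrix.det_submatrix_equiv_self finSumFinEquiv (matOf (p+q) e)]
  have hb : (matOf (p+q) e).submatrix finSumFinEquiv finSumFinEquiv =
      Matrix.fromBlocks (matOf p (fun i => e (Fin.castAdd q i)))
        (Matrix.of fun i j => matOf (p+q) e (Fin.castAdd q i) (Fin.natAdd p j)) 0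
        (matOf q (fun j => e (Fin.natAdd p j))) := by
    ext i j
    cases i with
    | inl i =>
      cases j with
      | inl j => simp [matOf, Matrix.fromBlocks]; rfl
      | inr j => simp [matOf, Matrix.fromBlocks]; rfl
    | inr i =>
      cases j with
      | inl j =>
        have := h j i
        simp only [Matrix.submatrix_apply, finSumFinEquiv_apply_left, finSumFinEquiv_apply_right,
          Matrix.fromBlocks_apply₂₁, matOf, Matrix.zero_apply]
        split_ifs <;> omega
      | inr j => simp [matOf, Matrix.fromBlocks]; rfl
  rw [hb, Matrix.det_fromBlocks_zero₂₁]

def psum {k : ℕ} (m : Fin k → ℕ) (j : ℕ) : ℕ :=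
  ∑ s : Fin k, if (s : ℕ) < j then m s else 0

def cnt {k : ℕ} (m : Fin (k+1) → ℕ) (i : ℕ) : ℕ :=
  ∑ t : Fin k, if psum m ((t : ℕ) + 1) ≤ i then 1 else 0

lemma psum_zero {k : ℕ} (m : Fin k → ℕ) : psum m 0 = 0 := by
  simp [psum]

lemma psum_one {k : ℕ} (m : Fin (k+1) → ℕ) : psum m 1 = m 0 := by
  rw [psum, Fin.sum_univ_succ]
  simp

lemma psum_mono {k : ℕ} (m : Fin k → ℕ) {j j' : ℕ} (h : j ≤ j') :
    psum m j ≤ psum m j' := by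
  apply Finset.sum_le_sum
  intro s _
  split_ifs <;> omega

lemma psum_le_sum {k : ℕ} (m : Fin k → ℕ) (j : ℕ) : psum m j ≤ ∑ s, m s := by
  apply Finset.sum_le_sum
  intro s _
  split_ifs <;> omega

lemma psum_shift {k : ℕ} (m : Fin (k+2) → ℕ) (j : ℕ) :
    psum m (j+1) = m 0 + psum (fun t : Fin (k+1) => m t.succ) j := by
  rw [psum, Fin.sum_univ_succ]
  simp only [Fin.val_zero, Nat.zero_lt_succ, if_true, Fin.val_succ, psum]
  congr 1
  apply Finset.sum_congr rfl
  intro s _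
  have : (s:ℕ) + 1 < j + 1 ↔ (s:ℕ) < j := by omega
  simp [this]

lemma cnt_le {k : ℕ} (m : Fin (k+1) → ℕ) (i : ℕ) : cnt m i ≤ k := by
  calc cnt m i ≤ ∑ _t : Fin k, 1 := by
        apply Finset.sum_le_sum; intro s _; split_ifs <;> omega
    _ = k := by simp

lemma cnt_lt_first {k : ℕ} (m : Fin (k+1) → ℕ) (i : ℕ) (h : i < m 0) : cnt m i = 0 := by
  rw [cnt]
  apply Finset.sum_eq_zero
  intro t _
  have h1 : psum m 1 ≤ psum m ((t:ℕ)+1) := psum_mono m (by omega)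
  rw [psum_one] at h1
  rw [if_neg (by omega)]

lemma cnt_shift {k : ℕ} (m : Fin (k+2) → ℕ) (j : ℕ) :
    cnt m (m 0 + j) = 1 + cnt (fun t : Fin (k+1) => m t.succ) j := by
  rw [cnt, Fin.sum_univ_succ]
  have h0 : psum m ((0 : Fin (k+1)) + 1 : ℕ) ≤ m 0 + j := by
    simp only [Fin.val_zero]
    rw [show (0:ℕ) + 1 = 1 from rfl, psum_one]
    omega
  rw [if_pos h0]
  congr 1
  rw [cnt]
  apply Finset.sum_congr rfl
  intro t _
  have h1 : psum m ((t.succ : ℕ) + 1) = m 0 + psum (fun t : Fin (k+1) => m t.succ) ((t:ℕ)+1) := by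
    rw [Fin.val_succ, psum_shift]
  rw [h1]
  have : m 0 + psum (fun t : Fin (k+1) => m t.succ) ((t:ℕ)+1) ≤ m 0 + j ↔
      psum (fun t : Fin (k+1) => m t.succ) ((t:ℕ)+1) ≤ j := by omega
  simp [this]

lemma matOf_ext {r : ℕ} {e e' : Fin r → ℕ} (h : ∀ i, e i = e' i) : matOf r e = matOf r e' := by
  have : e = e' := funext h
  rw [this]

lemma detE (f : ℤ → ℤ) (hf1 : f (-1) = 1) (hf0 : f 0 = 0)
    (hf : ∀ m : ℤ, f (m + 1) = f m + f (m - 1)) :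
    ∀ k : ℕ, ∀ m : Fin (k+1) → ℕ, ∀ r : ℕ, r = ∑ t, m t →
      (matOf r (fun i => (i : ℕ) + cnt m (i : ℕ))).det = ∏ t, f ((m t : ℤ) - 1) := by
  intro k
  induction k with
  | zero =>
    intro m r hr
    have h0 : ∀ i : Fin r, (i : ℕ) + cnt m (i : ℕ) = (i : ℕ) := by
      intro i; simp [cnt]
    rw [matOf_ext h0]
    have := (detRunAux f hf1 hf0 hf r).1
    rw [runMat] at this
    rw [this]
    have hr0 : r = m 0 := by rw [hr, Fin.sum_univ_one]
    rw [Fin.prod_univ_one, hr0]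
  | succ k ih =>
    intro m r hr
    set m' : Fin (k+1) → ℕ := fun t => m t.succ with hm'
    set p := m 0 with hp
    set r' := ∑ t, m' t with hr'
    have hpr : r = p + r' := by rw [hr, Fin.sum_univ_succ]
    -- transport to Fin (p + r')
    have hcast := det_matOf_cast hpr.symm (fun i : Fin r => (i : ℕ) + cnt m (i : ℕ))
    have hcv : ∀ i : Fin (p + r'), ((Fin.cast hpr.symm i : Fin r) : ℕ) = (i : ℕ) := fun i => rfl
    rw [matOf_ext (fun i => by rw [hcv i])] at hcast
    rw [← hcast]
    -- split
    rw [det_matOf_split p r' _ ?gap]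
    case gap =>
      intro i j
      have h1 : ((Fin.castAdd r' i : Fin (p + r')) : ℕ) = (i : ℕ) := rfl
      have h2 : ((Fin.natAdd p j : Fin (p + r')) : ℕ) = p + (j : ℕ) := rfl
      rw [h1, h2]
      have hc1 : cnt m (i : ℕ) = 0 := cnt_lt_first m _ i.isLt
      have hc2 : cnt m (p + (j : ℕ)) = 1 + cnt m' (j : ℕ) := cnt_shift m _
      rw [hc1, hc2]
      have := i.isLt
      omega
    -- first block
    have hb1 : (matOf p (fun i : Fin p =>
        ((Fin.castAdd r' i : Fin (p + r')) : ℕ) + cnt m ((Fin.castAdd r' i : Fin (p + r')) : ℕ))).det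
        = f ((p : ℤ) - 1) := by
      have he : ∀ i : Fin p, ((Fin.castAdd r' i : Fin (p + r')) : ℕ) +
          cnt m ((Fin.castAdd r' i : Fin (p + r')) : ℕ) = (i : ℕ) := by
        intro i
        have h1 : ((Fin.castAdd r' i : Fin (p + r')) : ℕ) = (i : ℕ) := rfl
        rw [h1, cnt_lt_first m _ i.isLt]; omega
      rw [matOf_ext he]
      exact (detRunAux f hf1 hf0 hf p).1
    -- second block
    have hb2 : (matOf r' (fun j : Fin r' =>
        ((Fin.natAdd p j : Fin (p + r')) : ℕ) + cnt m ((Fin.natAdd p j : Fin (p + r')) : ℕ))).det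
        = ∏ t, f ((m' t : ℤ) - 1) := by
      have he : ∀ j : Fin r', ((Fin.natAdd p j : Fin (p + r')) : ℕ) +
          cnt m ((Fin.natAdd p j : Fin (p + r')) : ℕ) = (p + 1) + ((j : ℕ) + cnt m' (j : ℕ)) := by
        intro j
        have h2 : ((Fin.natAdd p j : Fin (p + r')) : ℕ) = p + (j : ℕ) := rfl
        rw [h2, cnt_shift m _]
        ring
      rw [matOf_ext he, matOf_shift r' (p+1) (fun j => (j : ℕ) + cnt m' (j : ℕ))]
      exact ih m' r' hr'
    rw [hb1, hb2, Fin.prod_univ_succ (fun t : Fin (k+2) => f ((m t : ℤ) - 1))]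

lemma psum_succ' {K : ℕ} (m : Fin K → ℕ) (j : ℕ) (hj : j < K) :
    psum m (j+1) = psum m j + m ⟨j, hj⟩ := by
  rw [psum, psum]
  have : ∀ s : Fin K, (if (s:ℕ) < j + 1 then m s else 0) =
      (if (s:ℕ) < j then m s else 0) + (if s = ⟨j, hj⟩ then m s else 0) := by
    intro s
    rcases eq_or_ne s ⟨j, hj⟩ with h | h
    · subst h; simp
    · have : (s:ℕ) ≠ j := fun hc => h (Fin.ext hc)
      rw [if_neg h]
      split_ifs <;> omega
  rw [Finset.sum_congr rfl (fun s _ => this s), Finset.sum_add_distrib]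
  congr 1
  rw [Finset.sum_ite_eq' Finset.univ (⟨j, hj⟩ : Fin K) m]
  simp

lemma psum_full {K : ℕ} (m : Fin K → ℕ) (j : ℕ) (h : K ≤ j) :
    psum m j = ∑ t, m t := by
  apply Finset.sum_congr rfl
  intro s _
  rw [if_pos (lt_of_lt_of_le s.isLt h)]

lemma sum_ite_lt (N a : ℕ) (h : a ≤ N) :
    (∑ t : Fin N, if (t:ℕ) < a then (1:ℕ) else 0) = a := by
  rw [Fin.sum_univ_eq_sum_range (fun i => if i < a then (1:ℕ) else 0)]
  rw [← Finset.card_filter]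
  have : (Finset.range N).filter (fun i => i < a) = Finset.range a := by
    ext x; simp [Finset.mem_range, Finset.mem_filter]; omega
  rw [this, Finset.card_range]

lemma cnt_ge {k : ℕ} (m : Fin (k+1) → ℕ) (i : ℕ) (t : Fin k)
    (h : psum m ((t:ℕ)+1) ≤ i) : (t:ℕ) + 1 ≤ cnt m i := by
  have : (∑ t' : Fin k, if (t':ℕ) < (t:ℕ)+1 then (1:ℕ) else 0) ≤ cnt m i := by
    apply Finset.sum_le_sum
    intro s _
    have hmono : (s:ℕ) < (t:ℕ)+1 → psum m ((s:ℕ)+1) ≤ i :=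
      fun hs => le_trans (psum_mono m (by omega)) h
    split_ifs with h1 h2 <;> first | rfl | omega | exact absurd (hmono h1) h2
  rwa [sum_ite_lt k ((t:ℕ)+1) (by omega)] at this

lemma cnt_lt_of {k : ℕ} (m : Fin (k+1) → ℕ) (i : ℕ) (t : Fin k)
    (h : i < psum m ((t:ℕ)+1)) : cnt m i ≤ (t:ℕ) := by
  have : cnt m i ≤ (∑ t' : Fin k, if (t':ℕ) < (t:ℕ) then (1:ℕ) else 0) := by
    apply Finset.sum_le_sum
    intro s _
    have hmono : (t:ℕ) ≤ (s:ℕ) → ¬ (psum m ((s:ℕ)+1) ≤ i) := by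
      intro hs hc
      exact absurd (lt_of_le_of_lt (le_trans (psum_mono m (by omega)) hc) h) (lt_irrefl _)
    by_cases h1 : psum m ((s:ℕ)+1) ≤ i
    · by_cases h2 : (s:ℕ) < (t:ℕ)
      · simp [h1, h2]
      · exact absurd h1 (hmono (by omega))
    · rw [if_neg h1]
      exact Nat.zero_le _
  have h2 := sum_ite_lt k (t:ℕ) (le_of_lt t.isLt)
  omega

lemma cnt_mono {k : ℕ} (m : Fin (k+1) → ℕ) {i i' : ℕ} (h : i ≤ i') : cnt m i ≤ cnt m i' := by
  apply Finset.sum_le_sum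
  intro s _
  split_ifs <;> omega

def cntC {n : ℕ} (S : Finset (Fin n)) (x : Fin n) : ℕ :=
  (Finset.univ.filter (fun y : Fin n => y ∉ S ∧ (y:ℕ) < (x:ℕ))).card

def Phi {n : ℕ} (k : ℕ) (S : Finset (Fin n)) : Fin (k+1) → ℕ :=
  fun t => (S.filter (fun x => cntC S x = (t:ℕ))).card

def Psi {n : ℕ} (k : ℕ) (m : Fin (k+1) → ℕ) : Finset (Fin n) :=
  Finset.univ.filter (fun x => ∀ t : Fin k, (x:ℕ) ≠ psum m ((t:ℕ)+1) + (t:ℕ))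

lemma card_val_lt {n : ℕ} (a : ℕ) (ha : a ≤ n) :
    (Finset.univ.filter (fun y : Fin n => (y:ℕ) < a)).card = a := by
  rw [Finset.card_filter, Fin.sum_univ_eq_sum_range (fun i => if i < a then (1:ℕ) else 0),
    ← Finset.card_filter]
  have : (Finset.range n).filter (fun i => i < a) = Finset.range a := by
    ext x; simp [Finset.mem_range, Finset.mem_filter]; omega
  rw [this, Finset.card_range]

lemma cntC_split {n : ℕ} (S : Finset (Fin n)) (x : Fin n) :
    (x:ℕ) = (S.filter (fun y : Fin n => (y:ℕ) < (x:ℕ))).card + cntC S x := by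
  have h1 := card_val_lt (n := n) (x:ℕ) (le_of_lt x.isLt)
  have h2 := Finset.card_filter_add_card_filter_not
    (s := Finset.univ.filter (fun y : Fin n => (y:ℕ) < (x:ℕ))) (p := fun y => y ∈ S)
  have e1 : (Finset.univ.filter (fun y : Fin n => (y:ℕ) < (x:ℕ))).filter (fun y => y ∈ S)
      = S.filter (fun y : Fin n => (y:ℕ) < (x:ℕ)) := by
    ext y; simp [Finset.mem_filter]; tauto
  have e2 : (Finset.univ.filter (fun y : Fin n => (y:ℕ) < (x:ℕ))).filter (fun y => ¬ y ∈ S)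
      = Finset.univ.filter (fun y : Fin n => y ∉ S ∧ (y:ℕ) < (x:ℕ)) := by
    ext y; simp [Finset.mem_filter]; tauto
  rw [e1, e2] at h2
  rw [cntC]
  omega

lemma cntC_mono {n : ℕ} (S : Finset (Fin n)) {x x' : Fin n} (h : (x:ℕ) ≤ (x':ℕ)) :
    cntC S x ≤ cntC S x' := by
  apply Finset.card_le_card
  intro y hy
  simp only [Finset.mem_filter, Finset.mem_univ, true_and] at *
  exact ⟨hy.1, by omega⟩

lemma cntC_le {n k r : ℕ} (S : Finset (Fin n)) (hcard : S.card = r) (hn : n = r + k)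
    (x : Fin n) : cntC S x ≤ k := by
  have h1 : (Finset.univ.filter (fun y : Fin n => y ∉ S ∧ (y:ℕ) < (x:ℕ))) ⊆ Sᶜ := by
    intro y hy
    rw [Finset.mem_compl]
    exact (Finset.mem_filter.mp hy).2.1
  have h2 := Finset.card_le_card h1
  have h3 : Sᶜ.card = k := by
    rw [Finset.card_compl, hcard, Fintype.card_fin]; omega
  rw [cntC]; omega

lemma psum_phi {n k r : ℕ} (S : Finset (Fin n)) (hcard : S.card = r) (hn : n = r + k)
    (j : ℕ) : psum (Phi k S) j = (S.filter (fun y => cntC S y < j)).card := by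
  have hfib := Finset.card_eq_sum_card_fiberwise
    (f := fun y : Fin n => (⟨cntC S y, by have := cntC_le S hcard hn y; omega⟩ : Fin (k+1)))
    (s := S.filter (fun y => cntC S y < j)) (t := Finset.univ)
    (fun x _ => Finset.mem_univ _)
  rw [hfib]
  rw [psum]
  apply Finset.sum_congr rfl
  intro t _
  rw [Finset.filter_filter]
  by_cases ht : (t:ℕ) < j
  · rw [if_pos ht]
    rw [Phi]
    apply congrArg
    apply Finset.filter_congr
    intro y _
    constructor
    · intro h2
      refine ⟨by omega, Fin.ext (by simpa using h2)⟩
    · intro h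
      have h2 := congrArg Fin.val h.2
      simpa using h2
  · rw [if_neg ht]
    symm
    rw [Finset.card_eq_zero, Finset.filter_eq_empty_iff]
    intro y _
    intro hp
    obtain ⟨h1, h2⟩ := hp
    have h3 := congrArg Fin.val h2
    simp at h3
    omega

lemma Phi_sum {n k r : ℕ} (S : Finset (Fin n)) (hcard : S.card = r) (hn : n = r + k) :
    ∑ t, Phi k S t = r := by
  have h1 := psum_full (Phi k S) (k+1) (le_refl _)
  have h2 := psum_phi S hcard hn (k+1)
  rw [h1] at h2
  rw [h2]
  have : S.filter (fun y => cntC S y < k + 1) = S := by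
    apply Finset.filter_true_of_mem
    intro y _
    have := cntC_le S hcard hn y
    omega
  rw [this, hcard]

lemma Psi_compl {n k r : ℕ} (m : Fin (k+1) → ℕ) (hm : ∑ t, m t = r) (hn : n = r + k) :
    Finset.univ.filter (fun x : Fin n => ¬ ∀ t : Fin k, (x:ℕ) ≠ psum m ((t:ℕ)+1) + (t:ℕ))
      = Finset.image (fun t : Fin k =>
          (⟨psum m ((t:ℕ)+1) + (t:ℕ), by
            have h1 := psum_le_sum m ((t:ℕ)+1)
            have h2 := t.isLt
            omega⟩ : Fin n)) Finset.univ := by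
  ext x
  simp only [Finset.mem_filter, Finset.mem_univ, true_and, Finset.mem_image, not_forall, not_not]
  constructor
  · rintro ⟨t, ht⟩
    exact ⟨t, by rw [Fin.ext_iff]; simpa using ht.symm⟩
  · rintro ⟨t, ht⟩
    exact ⟨t, by rw [Fin.ext_iff] at ht; simpa using ht.symm⟩

lemma Bfin_strictMono {n k r : ℕ} (m : Fin (k+1) → ℕ) (hm : ∑ t, m t = r) (hn : n = r + k) :
    StrictMono (fun t : Fin k =>
      (⟨psum m ((t:ℕ)+1) + (t:ℕ), by
        have h1 := psum_le_sum m ((t:ℕ)+1)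
        have h2 := t.isLt
        omega⟩ : Fin n)) := by
  intro a b hab
  have h1 : psum m ((a:ℕ)+1) ≤ psum m ((b:ℕ)+1) := psum_mono m (by
    have : (a:ℕ) < (b:ℕ) := hab
    omega)
  have h2 : (a:ℕ) < (b:ℕ) := hab
  rw [Fin.lt_def]
  simp only
  omega

lemma card_Psi {n k r : ℕ} (m : Fin (k+1) → ℕ) (hm : ∑ t, m t = r) (hn : n = r + k) :
    (Psi k m : Finset (Fin n)).card = r := by
  have h2 := Finset.card_filter_add_card_filter_not
    (s := (Finset.univ : Finset (Fin n)))
    (p := fun x => ∀ t : Fin k, (x:ℕ) ≠ psum m ((t:ℕ)+1) + (t:ℕ))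
  rw [Psi_compl m hm hn] at h2
  have h3 := Finset.card_image_of_injective Finset.univ (Bfin_strictMono m hm hn).injective
  rw [h3] at h2
  simp only [Finset.card_univ, Fintype.card_fin] at h2
  rw [Psi]
  omega

lemma Psi_inj {n k r : ℕ} (m m' : Fin (k+1) → ℕ) (hm : ∑ t, m t = r) (hm' : ∑ t, m' t = r)
    (hn : n = r + k) (h : (Psi k m : Finset (Fin n)) = Psi k m') : m = m' := by
  have hcompl : Finset.univ.filter (fun x : Fin n => ¬ ∀ t : Fin k, (x:ℕ) ≠ psum m ((t:ℕ)+1) + (t:ℕ))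
      = Finset.univ.filter (fun x : Fin n => ¬ ∀ t : Fin k, (x:ℕ) ≠ psum m' ((t:ℕ)+1) + (t:ℕ)) := by
    rw [Finset.filter_not, Finset.filter_not]
    rw [show Finset.univ.filter (fun x : Fin n => ∀ t : Fin k, (x:ℕ) ≠ psum m ((t:ℕ)+1) + (t:ℕ)) = Psi k m from rfl,
      show Finset.univ.filter (fun x : Fin n => ∀ t : Fin k, (x:ℕ) ≠ psum m' ((t:ℕ)+1) + (t:ℕ)) = Psi k m' from rfl, h]
  rw [Psi_compl m hm hn, Psi_compl m' hm' hn] at hcompl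
  -- two strictly monotone maps with equal images are equal
  set B1 := (fun t : Fin k => (⟨psum m ((t:ℕ)+1) + (t:ℕ), by
      have h1 := psum_le_sum m ((t:ℕ)+1); have h2 := t.isLt; omega⟩ : Fin n)) with hB1
  set B2 := (fun t : Fin k => (⟨psum m' ((t:ℕ)+1) + (t:ℕ), by
      have h1 := psum_le_sum m' ((t:ℕ)+1); have h2 := t.isLt; omega⟩ : Fin n)) with hB2
  have hs1 : StrictMono B1 := Bfin_strictMono m hm hn
  have hs2 : StrictMono B2 := Bfin_strictMono m' hm' hn
  have hcardB : (Finset.image B1 Finset.univ).card = k := by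
    rw [Finset.card_image_of_injective Finset.univ hs1.injective]
    simp
  have he1 : B1 = (Finset.image B1 Finset.univ).orderEmbOfFin hcardB :=
    Finset.orderEmbOfFin_unique hcardB (fun x => Finset.mem_image_of_mem _ (Finset.mem_univ x)) hs1
  have he2 : B2 = (Finset.image B1 Finset.univ).orderEmbOfFin hcardB :=
    Finset.orderEmbOfFin_unique hcardB (fun x => by
      rw [hcompl]; exact Finset.mem_image_of_mem _ (Finset.mem_univ x)) hs2
  have hB : ∀ t : Fin k, psum m ((t:ℕ)+1) = psum m' ((t:ℕ)+1) := by
    intro t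
    have := congrFun (he1.trans he2.symm) t
    rw [Fin.ext_iff] at this
    exact Nat.add_right_cancel (this : psum m ((t:ℕ)+1) + (t:ℕ) = psum m' ((t:ℕ)+1) + (t:ℕ))
  have hp : ∀ j, j ≤ k + 1 → psum m j = psum m' j := by
    intro j hj
    rcases Nat.eq_zero_or_pos j with h0 | h0
    · subst h0; rw [psum_zero, psum_zero]
    · rcases Nat.lt_or_ge j (k+1) with hlt | hge
      · have := hB ⟨j - 1, by omega⟩
        simpa [Nat.sub_add_cancel h0] using this
      · have hj1 : j = k + 1 := by omega
        subst hj1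
        rw [psum_full m _ (le_refl _), psum_full m' _ (le_refl _), hm, hm']
  funext t
  have h1 := psum_succ' m (t:ℕ) t.isLt
  have h2 := psum_succ' m' (t:ℕ) t.isLt
  have h3 := hp (t:ℕ) (by omega)
  have h4 := hp ((t:ℕ)+1) (by have := t.isLt; omega)
  rw [Fin.eta] at h1 h2
  omega

lemma Psi_Phi {n k r : ℕ} (S : Finset (Fin n)) (hcard : S.card = r) (hn : n = r + k) :
    (Psi k (Phi k S) : Finset (Fin n)) = S := by
  have hsum : ∑ t, Phi k S t = r := Phi_sum S hcard hn
  have hcardPsi : (Psi k (Phi k S) : Finset (Fin n)).card = r := card_Psi _ hsum hn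
  have hsub : S ⊆ Psi k (Phi k S) := by
    intro x hx
    rw [Psi, Finset.mem_filter]
    refine ⟨Finset.mem_univ _, ?_⟩
    intro t
    have hP := psum_phi S hcard hn ((t:ℕ)+1)
    have hsplit := cntC_split S x
    set c := cntC S x with hc
    set cs := (S.filter (fun y : Fin n => (y:ℕ) < (x:ℕ))).card with hcs
    rcases le_or_gt c (t:ℕ) with hle | hgt
    · -- P ≥ cs + 1
      have hsubT : insert x (S.filter (fun y : Fin n => (y:ℕ) < (x:ℕ)))
          ⊆ S.filter (fun y => cntC S y < (t:ℕ)+1) := by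
        intro y hy
        rcases Finset.mem_insert.mp hy with h | h
        · subst h
          exact Finset.mem_filter.mpr ⟨hx, by omega⟩
        · obtain ⟨h1, h2⟩ := Finset.mem_filter.mp h
          refine Finset.mem_filter.mpr ⟨h1, ?_⟩
          have := cntC_mono S (le_of_lt h2)
          omega
      have hxi : x ∉ S.filter (fun y : Fin n => (y:ℕ) < (x:ℕ)) := by
        intro hxc
        exact absurd (Finset.mem_filter.mp hxc).2 (lt_irrefl _)
      have hcardT := Finset.card_le_card hsubT
      rw [Finset.card_insert_of_notMem hxi] at hcardT
      omega
    · -- P ≤ cs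
      have hsubT : S.filter (fun y => cntC S y < (t:ℕ)+1)
          ⊆ S.filter (fun y : Fin n => (y:ℕ) < (x:ℕ)) := by
        intro y hy
        obtain ⟨h1, h2⟩ := Finset.mem_filter.mp hy
        refine Finset.mem_filter.mpr ⟨h1, ?_⟩
        by_contra hge
        have := cntC_mono S (le_of_not_gt hge)
        omega
      have hcardT := Finset.card_le_card hsubT
      omega
  exact (Finset.eq_of_subset_of_card_le hsub (by omega)).symm

lemma det_psi {n k r : ℕ} (f : ℤ → ℤ) (hf1 : f (-1) = 1) (hf0 : f 0 = 0)
    (hf : ∀ m : ℤ, f (m + 1) = f m + f (m - 1))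
    (hn : n = r + k) (m : Fin (k+1) → ℕ) (hm : ∑ t, m t = r)
    (G : Matrix (Fin n) (Fin n) ℤ)
    (hG : ∀ i j : Fin n, G i j =
      if (i : ℕ) = (j : ℕ) + 1 then -1
      else if (i : ℕ) < (j : ℕ) then 1 else 0) :
    (G.submatrix (fun x : (Psi k m : Finset (Fin n)) => (x : Fin n))
      (fun x : (Psi k m : Finset (Fin n)) => (x : Fin n))).det
      = ∏ t, f ((m t : ℤ) - 1) := by
  have hcard : (Psi k m : Finset (Fin n)).card = r := card_Psi m hm hn
  set e : Fin r → Fin n := fun i => ⟨(i:ℕ) + cnt m (i:ℕ), by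
    have h1 := cnt_le m (i:ℕ)
    have h2 := i.isLt
    omega⟩ with he
  have hmono : StrictMono e := by
    intro a b hab
    have h1 : (a:ℕ) < (b:ℕ) := hab
    have h2 := cnt_mono m (le_of_lt h1)
    rw [Fin.lt_def]
    simp only [he]
    omega
  have hmem : ∀ i, e i ∈ (Psi k m : Finset (Fin n)) := by
    intro i
    rw [Psi, Finset.mem_filter]
    refine ⟨Finset.mem_univ _, ?_⟩
    intro t
    show (i:ℕ) + cnt m (i:ℕ) ≠ psum m ((t:ℕ)+1) + (t:ℕ)
    by_cases hle : psum m ((t:ℕ)+1) ≤ (i:ℕ)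
    · have := cnt_ge m (i:ℕ) t hle
      omega
    · have := cnt_lt_of m (i:ℕ) t (by omega)
      omega
  have hemb : e = ⇑((Psi k m : Finset (Fin n)).orderEmbOfFin hcard) :=
    Finset.orderEmbOfFin_unique hcard hmem hmono
  have hdet := Matrix.det_submatrix_equiv_self
    ((Psi k m : Finset (Fin n)).orderIsoOfFin hcard).toEquiv
    (G.submatrix (fun x : (Psi k m : Finset (Fin n)) => (x : Fin n))
      (fun x : (Psi k m : Finset (Fin n)) => (x : Fin n)))
  rw [← hdet, Matrix.submatrix_submatrix]
  have hmat : (G.submatrix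
      ((fun x : (Psi k m : Finset (Fin n)) => (x : Fin n)) ∘ ⇑((Psi k m : Finset (Fin n)).orderIsoOfFin hcard).toEquiv)
      ((fun x : (Psi k m : Finset (Fin n)) => (x : Fin n)) ∘ ⇑((Psi k m : Finset (Fin n)).orderIsoOfFin hcard).toEquiv))
      = matOf r (fun i => (i:ℕ) + cnt m (i:ℕ)) := by
    ext i j
    have hv : ∀ i : Fin r,
        (((((Psi k m : Finset (Fin n)).orderIsoOfFin hcard).toEquiv i : (Psi k m : Finset (Fin n))) : Fin n) : ℕ)
          = (i:ℕ) + cnt m (i:ℕ) := by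
      intro i
      show (((Psi k m : Finset (Fin n)).orderIsoOfFin hcard i : (Psi k m : Finset (Fin n))) : Fin n).val = _
      rw [Finset.coe_orderIsoOfFin_apply]
      have := congrFun hemb i
      rw [← this]
    simp only [Matrix.submatrix_apply, Function.comp_apply, hG, matOf, hv]
  rw [hmat]
  exact detE f hf1 hf0 hf k m r hm.symm

/-- The sum of all principal minors of order `n - k` of the Hessenberg matrix
`G_n` equals `∑_{j_1 + ⋯ + j_{k+1} = n - 2k - 1, j_t ≥ -1} f_{j_1} ⋯ f_{j_{k+1}}`,
where `f` is the Fibonacci sequence extended by `f_{-1} = 1`.  The sum over the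
integer tuples `(j_t)` with `j_t ≥ -1` is written via the shift `j_t = m_t - 1`
with nonnegative `m_t` summing to `n - k`. -/
theorem sum_principal_minors_hessenberg_fib (n k : ℕ) (hk : k ≤ n)
    (f : ℤ → ℤ) (hf1 : f (-1) = 1) (hf0 : f 0 = 0)
    (hf : ∀ m : ℤ, f (m + 1) = f m + f (m - 1))
    (G : Matrix (Fin n) (Fin n) ℤ)
    (hG : ∀ i j : Fin n, G i j =
      if (i : ℕ) = (j : ℕ) + 1 then -1
      else if (i : ℕ) < (j : ℕ) then 1 else 0) :
    ∑ t ∈ Finset.powersetCard (n - k) (Finset.univ : Finset (Fin n)),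
        (G.submatrix (fun x : t => (x : Fin n)) (fun x : t => (x : Fin n))).det =
      ∑ m ∈ Finset.Nat.antidiagonalTuple (k + 1) (n - k),
        ∏ s : Fin (k + 1), f ((m s : ℤ) - 1) := by
  have hn : n = (n - k) + k := by omega
  refine (Finset.sum_bij (fun (m : Fin (k+1) → ℕ) (_ : m ∈ Finset.Nat.antidiagonalTuple (k + 1) (n - k)) => (Psi k m : Finset (Fin n))) ?_ ?_ ?_ ?_).symm
  · intro m hm
    rw [Finset.Nat.mem_antidiagonalTuple] at hm
    rw [Finset.mem_powersetCard_univ]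
    exact card_Psi m hm hn
  · intro m1 hm1 m2 hm2 h
    rw [Finset.Nat.mem_antidiagonalTuple] at hm1 hm2
    exact Psi_inj m1 m2 hm1 hm2 hn h
  · intro S hS
    rw [Finset.mem_powersetCard_univ] at hS
    refine ⟨Phi k S, ?_, ?_⟩
    · rw [Finset.Nat.mem_antidiagonalTuple]
      exact Phi_sum S hS hn
    · exact Psi_Phi S hS hn
  · intro m hm
    rw [Finset.Nat.mem_antidiagonalTuple] at hm
    exact (det_psi f hf1 hf0 hf hn m hm G hG).symm
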